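/- Under the same setup (F ⊂ ℝ^d convex compact, R convex with min over F equal to 0, η > 0, M_1 = 0, arbitrary x_t and M_t in ℝ^d, f_{t+1} = argmin_{f∈F} [ η⟨f, Σ_{s=1}^{t} x_s + M_{t+1}⟩ + R(f) ], g_{t+1} = argmin_{f∈F} [ η⟨f, Σ_{s=1}^{t} x_s⟩ + R(f) ], f_1 = argmin_{f∈F} R(f)), for every f* ∈ F: Σ_{t=1}^{T} ⟨f_t − f*, x_t⟩ ≤ Σ_{t=1}^{T} ⟨f_t − g_{t+1}, x_t − M_t⟩ + η^{-1} R(f*). -/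

import Mathlib

open Finset

lemma sum_sub_mul' {d : ℕ} (a b m : Fin d → ℝ) :
    ∑ i, (a i - b i) * m i = (∑ i, a i * m i) - ∑ i, b i * m i := by
  simp [sub_mul, Finset.sum_sub_distrib]

lemma sum_mul_add' {d : ℕ} (a b c : Fin d → ℝ) :
    ∑ i, a i * (b i + c i) = (∑ i, a i * b i) + ∑ i, a i * c i := by
  simp [mul_add, Finset.sum_add_distrib]

/-- **Regret decomposition for Optimistic Follow the Regularized Leader.**
Under the same setup, for every `f* ∈ F`:
`Σ_{t=1}^T ⟨f_t − f*, x_t⟩ ≤ Σ_{t=1}^T ⟨f_t − g_{t+1}, x_t − M_t⟩ + η⁻¹ R f*`. -/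
theorem stmt_2 {d T : ℕ} (F : Set (Fin d → ℝ)) (hFconv : Convex ℝ F)
    (hFcomp : IsCompact F)
    (R : (Fin d → ℝ) → ℝ) (hRconv : ConvexOn ℝ Set.univ R)
    (hRnonneg : ∀ p ∈ F, 0 ≤ R p)
    (η : ℝ) (hη : 0 < η)
    (x M : ℕ → (Fin d → ℝ)) (hM1 : M 1 = 0)
    (f g : ℕ → (Fin d → ℝ))
    (hf1 : f 1 ∈ F ∧ ∀ p ∈ F, R (f 1) ≤ R p) (hf1min : R (f 1) = 0)
    (hf : ∀ t ∈ Icc 1 T, f (t + 1) ∈ F ∧ ∀ p ∈ F,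
      η * (∑ i, f (t + 1) i * ((∑ s ∈ Icc 1 t, x s) i + M (t + 1) i)) + R (f (t + 1)) ≤
        η * (∑ i, p i * ((∑ s ∈ Icc 1 t, x s) i + M (t + 1) i)) + R p)
    (hg : ∀ t ∈ Icc 1 T, g (t + 1) ∈ F ∧ ∀ p ∈ F,
      η * (∑ i, g (t + 1) i * (∑ s ∈ Icc 1 t, x s) i) + R (g (t + 1)) ≤
        η * (∑ i, p i * (∑ s ∈ Icc 1 t, x s) i) + R p)
    (fstar : Fin d → ℝ) (hfstar : fstar ∈ F) :
    ∑ t ∈ Icc 1 T, ∑ i, (f t i - fstar i) * x t i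
      ≤ (∑ t ∈ Icc 1 T, ∑ i, (f t i - g (t + 1) i) * (x t i - M t i)) + η⁻¹ * R fstar := by
  classical
  set g' : ℕ → (Fin d → ℝ) := fun t => if t = 1 then f 1 else g t with hg'def
  have hg'1 : g' 1 = f 1 := by simp [hg'def]
  have hg'succ : ∀ t : ℕ, 2 ≤ t → g' t = g t := by
    intro t ht
    show (if t = 1 then f 1 else g t) = g t
    rw [if_neg (by omega)]
  -- rewrite the hypotheses with pointwise sums
  have hf' : ∀ t ∈ Icc 1 T, ∀ p ∈ F,
      η * (∑ i, f (t + 1) i * ((∑ s ∈ Icc 1 t, x s i) + M (t + 1) i)) + R (f (t + 1)) ≤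
        η * (∑ i, p i * ((∑ s ∈ Icc 1 t, x s i) + M (t + 1) i)) + R p := by
    intro t ht p hp
    have := (hf t ht).2 p hp
    simpa [Finset.sum_apply] using this
  have hg'' : ∀ t ∈ Icc 1 T, ∀ p ∈ F,
      η * (∑ i, g (t + 1) i * (∑ s ∈ Icc 1 t, x s i)) + R (g (t + 1)) ≤
        η * (∑ i, p i * (∑ s ∈ Icc 1 t, x s i)) + R p := by
    intro t ht p hp
    have := (hg t ht).2 p hp
    simpa [Finset.sum_apply] using this
  -- f (t) ∈ F for all 1 ≤ t ≤ T
  have hfmem : ∀ n, n ≤ T → f (n + 1) ∈ F := by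
    intro n hn
    rcases Nat.eq_zero_or_pos n with h0 | hpos
    · subst h0; exact hf1.1
    · exact (hf n (by simp; omega)).1
  -- key "be the leader" induction
  have key : ∀ n, n ≤ T →
      (∑ t ∈ Icc 1 n, ((∑ i, g' (t + 1) i * x t i)
          + ∑ i, (f t i - g' (t + 1) i) * M t i))
        ≤ (∑ i, g' (n + 1) i * (∑ s ∈ Icc 1 n, x s i)) + η⁻¹ * R (g' (n + 1)) := by
    intro n
    induction n with
    | zero =>
        intro _; simp [hg'1, hf1min]
    | succ n ih =>
        intro hnT
        have hnle : n ≤ T := by omega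
        have IH := ih hnle
        have hsplit : 1 ≤ n + 1 := by omega
        -- fact (b): g'(n+1) minimizes φ_n, compare with f(n+1)
        have factb :
            η * (∑ i, g' (n + 1) i * (∑ s ∈ Icc 1 n, x s i)) + R (g' (n + 1)) ≤
            η * (∑ i, f (n + 1) i * (∑ s ∈ Icc 1 n, x s i)) + R (f (n + 1)) := by
          rcases Nat.eq_zero_or_pos n with h0 | hpos
          · subst h0; simp [hg'1]
          · have hn' : n ∈ Icc 1 T := by simp; omega
            have := hg'' n hn' (f (n + 1)) (hfmem n hnle)
            rw [hg'succ (n + 1) (by omega)]; exact this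
        -- fact (c): f(n+1) minimizes φ_n + ⟨·, M(n+1)⟩, compare with g(n+2)
        have hgn2mem : g (n + 2) ∈ F := (hg (n + 1) (by simp; omega)).1
        have factc :
            η * (∑ i, f (n + 1) i * ((∑ s ∈ Icc 1 n, x s i) + M (n + 1) i)) + R (f (n + 1)) ≤
            η * (∑ i, g (n + 2) i * ((∑ s ∈ Icc 1 n, x s i) + M (n + 1) i)) + R (g (n + 2)) := by
          rcases Nat.eq_zero_or_pos n with h0 | hpos
          · subst h0
            simp only [Icc_self, Icc_eq_empty_of_lt, hM1]
            simpa [hM1] using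
              (by
                have := hf1.2 (g 2) hgn2mem
                simpa [hM1] using this : R (f 1) ≤ R (g 2))
          · exact hf' n (by simp; omega) (g (n + 2)) hgn2mem
        -- expand and combine
        rw [Finset.sum_Icc_succ_top hsplit]
        have hxsplit : ∀ i : Fin d, (∑ s ∈ Icc 1 (n + 1), x s i)
            = (∑ s ∈ Icc 1 n, x s i) + x (n + 1) i := by
          intro i; rw [Finset.sum_Icc_succ_top hsplit]
        have hRHS : (∑ i, g' (n + 2) i * (∑ s ∈ Icc 1 (n + 1), x s i))
            = (∑ i, g' (n + 2) i * (∑ s ∈ Icc 1 n, x s i))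
              + ∑ i, g' (n + 2) i * x (n + 1) i := by
          calc (∑ i, g' (n + 2) i * (∑ s ∈ Icc 1 (n + 1), x s i))
              = ∑ i, g' (n + 2) i * ((∑ s ∈ Icc 1 n, x s i) + x (n + 1) i) := by
                apply Finset.sum_congr rfl; intro i _; rw [hxsplit i]
            _ = _ := sum_mul_add' _ _ _
        rw [hRHS, hg'succ (n + 2) (by omega)]
        have e1 := sum_sub_mul' (f (n + 1)) (g' (n + 2)) (M (n + 1))
        have e2 := sum_mul_add' (f (n + 1)) (fun i => ∑ s ∈ Icc 1 n, x s i) (M (n + 1))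
        have e3 := sum_mul_add' (g (n + 2)) (fun i => ∑ s ∈ Icc 1 n, x s i) (M (n + 1))
        rw [hg'succ (n + 2) (by omega)] at e1
        -- divide facts by η
        have hη' : η ≠ 0 := ne_of_gt hη
        have factb' : (∑ i, g' (n + 1) i * (∑ s ∈ Icc 1 n, x s i)) + η⁻¹ * R (g' (n + 1)) ≤
            (∑ i, f (n + 1) i * (∑ s ∈ Icc 1 n, x s i)) + η⁻¹ * R (f (n + 1)) := by
          rw [← mul_le_mul_iff_right₀ hη]
          calc η * ((∑ i, g' (n + 1) i * (∑ s ∈ Icc 1 n, x s i)) + η⁻¹ * R (g' (n + 1)))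
              = η * (∑ i, g' (n + 1) i * (∑ s ∈ Icc 1 n, x s i)) + R (g' (n + 1)) := by
                field_simp
            _ ≤ η * (∑ i, f (n + 1) i * (∑ s ∈ Icc 1 n, x s i)) + R (f (n + 1)) := factb
            _ = _ := by field_simp
        have factc' : (∑ i, f (n + 1) i * ((∑ s ∈ Icc 1 n, x s i) + M (n + 1) i))
              + η⁻¹ * R (f (n + 1)) ≤
            (∑ i, g (n + 2) i * ((∑ s ∈ Icc 1 n, x s i) + M (n + 1) i))
              + η⁻¹ * R (g (n + 2)) := by
          rw [← mul_le_mul_iff_right₀ hη]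
          calc η * ((∑ i, f (n + 1) i * ((∑ s ∈ Icc 1 n, x s i) + M (n + 1) i))
                + η⁻¹ * R (f (n + 1)))
              = η * (∑ i, f (n + 1) i * ((∑ s ∈ Icc 1 n, x s i) + M (n + 1) i))
                + R (f (n + 1)) := by field_simp
            _ ≤ _ := factc
            _ = _ := by field_simp
        simp only [e2, e3] at factc'
        linarith [IH, factb', factc', e1]
  -- final comparison of g'(T+1) with fstar
  have final : (∑ i, g' (T + 1) i * (∑ s ∈ Icc 1 T, x s i)) + η⁻¹ * R (g' (T + 1)) ≤
      (∑ i, fstar i * (∑ s ∈ Icc 1 T, x s i)) + η⁻¹ * R fstar := by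
    rcases Nat.eq_zero_or_pos T with h0 | hpos
    · subst h0
      simp [hg'1, hf1min]
      have h0R := hRnonneg fstar hfstar
      positivity
    · have hT' : T ∈ Icc 1 T := by simp; omega
      rw [hg'succ (T + 1) (by omega)]
      have h := hg'' T hT' fstar hfstar
      rw [← mul_le_mul_iff_right₀ hη]
      calc η * ((∑ i, g (T + 1) i * (∑ s ∈ Icc 1 T, x s i)) + η⁻¹ * R (g (T + 1)))
          = η * (∑ i, g (T + 1) i * (∑ s ∈ Icc 1 T, x s i)) + R (g (T + 1)) := by
            field_simp
        _ ≤ _ := h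
        _ = _ := by field_simp
  -- algebraic identity per time step
  have ident : ∀ t ∈ Icc 1 T,
      (∑ i, (f t i - fstar i) * x t i)
        = (∑ i, (f t i - g' (t + 1) i) * (x t i - M t i))
          + ((∑ i, g' (t + 1) i * x t i) + ∑ i, (f t i - g' (t + 1) i) * M t i)
          - ∑ i, fstar i * x t i := by
    intro t _
    rw [← Finset.sum_add_distrib, ← Finset.sum_add_distrib, ← Finset.sum_sub_distrib]
    apply Finset.sum_congr rfl; intro i _; ring
  have hgg' : ∀ t ∈ Icc 1 T, g (t + 1) = g' (t + 1) := by
    intro t ht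
    simp only [mem_Icc] at ht
    exact (hg'succ (t + 1) (by omega)).symm
  have hC : ∑ t ∈ Icc 1 T, ∑ i, fstar i * x t i
      = ∑ i, fstar i * (∑ s ∈ Icc 1 T, x s i) := by
    rw [Finset.sum_comm]
    apply Finset.sum_congr rfl; intro i _
    rw [Finset.mul_sum]
  calc ∑ t ∈ Icc 1 T, ∑ i, (f t i - fstar i) * x t i
      = (∑ t ∈ Icc 1 T, ∑ i, (f t i - g' (t + 1) i) * (x t i - M t i))
        + (∑ t ∈ Icc 1 T, ((∑ i, g' (t + 1) i * x t i)
            + ∑ i, (f t i - g' (t + 1) i) * M t i))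
        - ∑ i, fstar i * (∑ s ∈ Icc 1 T, x s i) := by
        rw [← hC, ← Finset.sum_add_distrib, ← Finset.sum_sub_distrib]
        exact Finset.sum_congr rfl ident
    _ ≤ (∑ t ∈ Icc 1 T, ∑ i, (f t i - g' (t + 1) i) * (x t i - M t i))
        + η⁻¹ * R fstar := by
        have h1 := key T le_rfl
        linarith [final]
    _ = _ := by
        have : ∀ t ∈ Icc 1 T, (∑ i, (f t i - g' (t + 1) i) * (x t i - M t i))
            = ∑ i, (f t i - g (t + 1) i) * (x t i - M t i) := by
          intro t ht; rw [hgg' t ht]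
        rw [Finset.sum_congr rfl this]
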